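/- Strict inequality in the Burbea–Hahn bound holds if and only if (C_Ω(z;X)/B_Ω(z;X)) · b_{z,X} ≠ b_z c_{z,X}; i.e., B_Ω(z;X) > C_Ω(z;X)/‖b_z c_{z,X}‖_{L²(Ω)} iff b_z c_{z,X} is not orthogonal to S_{z,X}. -/

import Mathlib

open MeasureTheory Complex ComplexConjugate Metric

noncomputable section
set_option maxHeartbeats 8000000
set_option synthInstance.maxHeartbeats 1000000


abbrev Cn (n : ℕ) := EuclideanSpace ℂ (Fin n)

instance {n : ℕ} : MeasurableSpace (Cn n) := MeasurableSpace.comap WithLp.ofLp MeasurableSpace.pi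
instance {n : ℕ} : BorelSpace (Cn n) := PiLp.borelSpace _
instance {n : ℕ} : MeasureSpace (Cn n) := ⟨Measure.map (WithLp.toLp 2) (volume : Measure (Fin n → ℂ))⟩

lemma cn_meas_toLp {n : ℕ} : Measurable (WithLp.toLp 2 : (Fin n → ℂ) → Cn n) := by
  rintro s ⟨t, ht, rfl⟩
  exact ht

lemma cn_open_pos {n : ℕ} (U : Set (Cn n)) (h : IsOpen U) (hne : U.Nonempty) :
    0 < volume U := by
  show 0 < Measure.map (WithLp.toLp 2) (volume : Measure (Fin n → ℂ)) U
  rw [Measure.map_apply cn_meas_toLp h.measurableSet]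
  have h2 : IsOpen ((WithLp.toLp 2 : (Fin n → ℂ) → Cn n) ⁻¹' U) :=
    h.preimage (PiLp.continuous_toLp 2 _)
  obtain ⟨x, hx⟩ := hne
  exact h2.measure_pos (volume : Measure (Fin n → ℂ)) ⟨WithLp.ofLp x, hx⟩

lemma cn_norm_coord {n : ℕ} (x : Cn n) (i : Fin n) : ‖x i‖ ≤ ‖x‖ := by
  rw [EuclideanSpace.norm_eq]
  have h1 : ‖x i‖ ^ 2 ≤ ∑ j, ‖x j‖ ^ 2 :=
    Finset.single_le_sum (fun j _ => sq_nonneg ‖x j‖) (Finset.mem_univ i)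
  calc ‖x i‖ = Real.sqrt (‖x i‖ ^ 2) := by rw [Real.sqrt_sq (norm_nonneg _)]
    _ ≤ _ := Real.sqrt_le_sqrt h1

lemma cn_vol_lt_top {n : ℕ} {Ω : Set (Cn n)} (hΩb : Bornology.IsBounded Ω) :
    volume Ω < ⊤ := by
  obtain ⟨R, hR⟩ := hΩb.subset_closedBall 0
  have hsub : (WithLp.toLp 2 : (Fin n → ℂ) → Cn n) ⁻¹' closedBall 0 R ⊆
      Set.pi Set.univ (fun _ : Fin n => closedBall (0:ℂ) R) := by
    intro x hx i _
    have h1 := cn_norm_coord (WithLp.toLp 2 x) i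
    have hx' : WithLp.toLp 2 x ∈ closedBall (0 : Cn n) R := hx
    simp only [mem_closedBall, dist_zero_right] at hx' ⊢
    exact h1.trans hx'
  calc volume Ω ≤ volume (closedBall (0 : Cn n) R) := measure_mono hR
    _ = (volume : Measure (Fin n → ℂ)) ((WithLp.toLp 2 : (Fin n → ℂ) → Cn n) ⁻¹' closedBall 0 R) :=
        Measure.map_apply cn_meas_toLp measurableSet_closedBall
    _ ≤ volume (Set.pi Set.univ (fun _ : Fin n => closedBall (0:ℂ) R)) :=
          measure_mono hsub
    _ = ∏ _i : Fin n, volume (closedBall (0:ℂ) R) := Measure.pi_pi _ _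
    _ < ⊤ := ENNReal.prod_lt_top
        (fun i _ => (measure_closedBall_lt_top : volume (closedBall (0:ℂ) R) < ⊤))

lemma ae_zero_eqOn {n : ℕ} {Ω : Set (Cn n)} (hΩo : IsOpen Ω) {f : Cn n → ℂ}
    (hf : ContinuousOn f Ω) (h : f =ᵐ[volume.restrict Ω] 0) : ∀ ζ ∈ Ω, f ζ = 0 := by
  intro ζ hζ
  by_contra hne
  have hV : IsOpen (Ω ∩ f ⁻¹' ({0}ᶜ)) :=
    hf.isOpen_inter_preimage hΩo isOpen_compl_singleton
  have hpos := cn_open_pos _ hV ⟨ζ, hζ, hne⟩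
  have h0 : volume.restrict Ω {x | ¬ f x = 0} = 0 := by
    have := h
    rw [Filter.EventuallyEq, ae_iff] at this
    simpa using this
  have hle : volume (Ω ∩ f ⁻¹' ({0}ᶜ)) ≤ volume.restrict Ω {x | ¬ f x = 0} := by
    rw [Measure.restrict_apply' hΩo.measurableSet]
    apply measure_mono
    rintro x ⟨hx1, hx2⟩
    exact ⟨hx2, hx1⟩
  rw [h0] at hle
  exact absurd (le_antisymm hle bot_le) (ne_of_gt hpos)

variable {α : Type*} [MeasurableSpace α] {μ : Measure α}

lemma int_mul_conj {f g : α → ℂ} (hf : MemLp f 2 μ) (hg : MemLp g 2 μ) :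
    Integrable (fun x => f x * conj (g x)) μ := by
  have h := MeasureTheory.L2.integrable_inner (𝕜 := ℂ) (hg.toLp g) (hf.toLp f)
  refine h.congr ?_
  filter_upwards [hg.coeFn_toLp, hf.coeFn_toLp] with x h1 h2
  rw [RCLike.inner_apply, h1, h2, mul_comm]

lemma int_normsq {f : α → ℂ} (hf : MemLp f 2 μ) :
    Integrable (fun x => ‖f x‖ ^ 2) μ := by
  have h := (int_mul_conj hf hf).re
  refine h.congr ?_
  filter_upwards with x
  rw [Complex.mul_conj]
  show RCLike.re ((Complex.normSq (f x) : ℝ) : ℂ) = _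
  rw [RCLike.re_to_complex, Complex.ofReal_re, ← Complex.sq_norm]

lemma csq (v w : ℂ) : ‖v + w‖ ^ 2 = ‖v‖ ^ 2 + 2 * (w * conj v).re + ‖w‖ ^ 2 := by
  have h : ∀ z : ℂ, ‖z‖ ^ 2 = Complex.normSq z := fun z => by
    rw [Complex.sq_norm]
  rw [h, h, h, Complex.normSq_apply, Complex.normSq_apply, Complex.normSq_apply]
  simp only [Complex.mul_re, Complex.conj_re, Complex.conj_im, Complex.add_re, Complex.add_im]
  ring

lemma exp_sq {u w : α → ℂ} (hu : MemLp u 2 μ) (hw : MemLp w 2 μ) (a : ℂ) :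
    ∫ x, ‖u x + a * w x‖ ^ 2 ∂μ =
      (∫ x, ‖u x‖ ^ 2 ∂μ) + 2 * (a * ∫ x, w x * conj (u x) ∂μ).re +
        ‖a‖ ^ 2 * ∫ x, ‖w x‖ ^ 2 ∂μ := by
  have hint1 : Integrable (fun x => ‖u x‖ ^ 2) μ := int_normsq hu
  have hint2 : Integrable (fun x => w x * conj (u x)) μ := int_mul_conj hw hu
  have hint2' : Integrable (fun x => a * (w x * conj (u x))) μ := hint2.const_mul a
  have hint3 : Integrable (fun x => ‖w x‖ ^ 2) μ := int_normsq hw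
  have hptw : ∀ x, ‖u x + a * w x‖ ^ 2 =
      ‖u x‖ ^ 2 + 2 * (a * (w x * conj (u x))).re + ‖a‖ ^ 2 * ‖w x‖ ^ 2 := by
    intro x
    rw [csq]
    rw [norm_mul, mul_pow]
    ring_nf
  calc ∫ x, ‖u x + a * w x‖ ^ 2 ∂μ
      = ∫ x, (‖u x‖ ^ 2 + 2 * (a * (w x * conj (u x))).re + ‖a‖ ^ 2 * ‖w x‖ ^ 2) ∂μ := by
        congr 1; funext x; exact hptw x
    _ = (∫ x, ‖u x‖ ^ 2 ∂μ) + 2 * (a * ∫ x, w x * conj (u x) ∂μ).re +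
        ‖a‖ ^ 2 * ∫ x, ‖w x‖ ^ 2 ∂μ := by
        have h2int : Integrable (fun x => 2 * (a * (w x * conj (u x))).re) μ := by
          exact (hint2'.re).const_mul 2
        have hint12 : Integrable
            (fun x => ‖u x‖ ^ 2 + 2 * (a * (w x * conj (u x))).re) μ := by
          exact hint1.add h2int
        have hint3' : Integrable (fun x => ‖a‖ ^ 2 * ‖w x‖ ^ 2) μ := by
          exact hint3.const_mul _
        have e2 : ∫ x, (a * (w x * conj (u x))).re ∂μ
            = (a * ∫ x, w x * conj (u x) ∂μ).re := by
          have := integral_re hint2'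
          simpa [integral_const_mul] using this
        rw [integral_add hint12 hint3', integral_add hint1 h2int,
          integral_const_mul (2:ℝ), integral_const_mul (‖a‖^2), e2]

/-- Membership in the Bergman space `A²(Ω)`: holomorphic on `Ω` and square-integrable. -/
def A2mem {n : ℕ} (Ω : Set (Cn n)) (f : Cn n → ℂ) : Prop :=
  DifferentiableOn ℂ f Ω ∧ MeasureTheory.MemLp f 2 (volume.restrict Ω)

/-- The `L²(Ω)` norm of a function. -/
def L2norm {n : ℕ} (Ω : Set (Cn n)) (f : Cn n → ℂ) : ℝ :=
  Real.sqrt (∫ ζ in Ω, ‖f ζ‖ ^ 2)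

/-- `K` is the Bergman kernel of `Ω`: for each `z ∈ Ω`, `K (·, z) ∈ A²(Ω)` and `K`
has the reproducing property. -/
def IsBergmanKernel {n : ℕ} (Ω : Set (Cn n)) (K : Cn n → Cn n → ℂ) : Prop :=
  (∀ z ∈ Ω, A2mem Ω (fun ζ => K ζ z)) ∧
  (∀ f, A2mem Ω f → ∀ z ∈ Ω, f z = ∫ ζ in Ω, f ζ * conj (K ζ z))

/-- The normalized Bergman kernel `b_z = K(·,z)/√K(z,z)`. -/
def bz {n : ℕ} (K : Cn n → Cn n → ℂ) (z ζ : Cn n) : ℂ :=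
  K ζ z / (Real.sqrt (K z z).re : ℂ)

/-- `X̄_z K(ζ,z) = Σ_j conj X_j ∂K(ζ,z)/∂z̄_j`, computed as the conjugate of the
complex directional derivative of the holomorphic function `w ↦ conj (K ζ w)`. -/
def barDeriv {n : ℕ} (K : Cn n → Cn n → ℂ) (X z ζ : Cn n) : ℂ :=
  conj (fderiv ℂ (fun w => conj (K ζ w)) z X)

/-- The Bergman metric `B_Ω(z;X)`. -/
def BergmanMetric {n : ℕ} (Ω : Set (Cn n)) (K : Cn n → Cn n → ℂ) (z X : Cn n) : ℝ :=
  (Real.sqrt (K z z).re)⁻¹ *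
    sSup {r | ∃ f : Cn n → ℂ, DifferentiableOn ℂ f Ω ∧ f z = 0 ∧
      (∫ ζ in Ω, ‖f ζ‖ ^ 2) ≤ 1 ∧ r = ‖fderiv ℂ f z X‖}

/-- The Carathéodory metric `C_Ω(z;X)`. -/
def CaraMetric {n : ℕ} (Ω : Set (Cn n)) (z X : Cn n) : ℝ :=
  sSup {r | ∃ f : Cn n → ℂ, DifferentiableOn ℂ f Ω ∧ f z = 0 ∧
      (∀ ζ ∈ Ω, ‖f ζ‖ < 1) ∧ r = ‖fderiv ℂ f z X‖}

/-- A Carathéodory extremal function `c_{z,X}`. -/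
def IsCaraExtremal {n : ℕ} (Ω : Set (Cn n)) (z X : Cn n) (c : Cn n → ℂ) : Prop :=
  DifferentiableOn ℂ c Ω ∧ c z = 0 ∧ (∀ ζ ∈ Ω, ‖c ζ‖ < 1) ∧
    fderiv ℂ c z X = (CaraMetric Ω z X : ℂ)

/-- The subspace `S_{z,X} = {f ∈ A²(Ω) : f(z)=0, Xf(z)=0}`. -/
def SzX {n : ℕ} (Ω : Set (Cn n)) (z X : Cn n) (f : Cn n → ℂ) : Prop :=
  A2mem Ω f ∧ f z = 0 ∧ fderiv ℂ f z X = 0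

/-- `p = P_{z,X} g`: the orthogonal projection of `g` onto `S_{z,X}^⊥`,
characterized by `p ∈ A²(Ω)`, `p ⊥ S_{z,X}` and `g - p ∈ S_{z,X}`. -/
def IsProj {n : ℕ} (Ω : Set (Cn n)) (z X : Cn n) (g p : Cn n → ℂ) : Prop :=
  A2mem Ω p ∧ (∀ h, SzX Ω z X h → (∫ ζ in Ω, h ζ * conj (p ζ)) = 0) ∧
    SzX Ω z X (g - p)

/-- The (unit-norm) Bergman extremal function `b_{z,X}` with `X b_{z,X}(z) > 0`. -/
def IsBergmanExtremal {n : ℕ} (Ω : Set (Cn n)) (K : Cn n → Cn n → ℂ) (z X : Cn n)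
    (b : Cn n → ℂ) : Prop :=
  A2mem Ω b ∧ b z = 0 ∧ L2norm Ω b = 1 ∧
    fderiv ℂ b z X = ((Real.sqrt (K z z).re * BergmanMetric Ω K z X : ℝ) : ℂ) ∧
    ∀ f : Cn n → ℂ, DifferentiableOn ℂ f Ω → f z = 0 → (∫ ζ in Ω, ‖f ζ‖ ^ 2) ≤ 1 →
      ‖fderiv ℂ f z X‖ ≤ Real.sqrt (K z z).re * BergmanMetric Ω K z X

/-- Strict inequality in the Burbea–Hahn bound holds iff
`(C/B)·b_{z,X} ≠ b_z c_{z,X}`, iff `b_z c_{z,X}` is not orthogonal to `S_{z,X}`. -/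
theorem stmt_14 {n : ℕ} (Ω : Set (Cn n)) (hΩo : IsOpen Ω) (hΩc : IsConnected Ω)
    (hΩb : Bornology.IsBounded Ω)
    (K : Cn n → Cn n → ℂ) (hK : IsBergmanKernel Ω K)
    (z : Cn n) (hz : z ∈ Ω) (X : Cn n) (hX : X ≠ 0)
    (b : Cn n → ℂ) (hb : IsBergmanExtremal Ω K z X b)
    (c : Cn n → ℂ) (hc : IsCaraExtremal Ω z X c) :
    (BergmanMetric Ω K z X > CaraMetric Ω z X / L2norm Ω (fun ζ => bz K z ζ * c ζ) ↔
      ∃ ζ ∈ Ω, ((CaraMetric Ω z X / BergmanMetric Ω K z X : ℝ) : ℂ) * b ζ ≠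
        bz K z ζ * c ζ) ∧
    (BergmanMetric Ω K z X > CaraMetric Ω z X / L2norm Ω (fun ζ => bz K z ζ * c ζ) ↔
      ¬ ∀ h, SzX Ω z X h → (∫ ζ in Ω, bz K z ζ * c ζ * conj (h ζ)) = 0) := by
  classical
  obtain ⟨hKmem, hKrep⟩ := hK
  obtain ⟨hbA, hbz0, hbnorm, hbD, hbext⟩ := hb
  obtain ⟨hcD, hcz0, hclt, hcD'⟩ := hc
  haveI hfin : IsFiniteMeasure (volume.restrict Ω) :=
    ⟨by rw [Measure.restrict_apply_univ]; exact cn_vol_lt_top hΩb⟩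
  set Cm := CaraMetric Ω z X with hCm
  set Bm := BergmanMetric Ω K z X with hBm
  set κ := (K z z).re with hκdef
  set sK := Real.sqrt κ with hsKdef
  set M := sK * Bm with hMdef
  -- basic kernel facts
  have hKA : A2mem Ω (fun ζ => K ζ z) := hKmem z hz
  have hrepK : K z z = ∫ ζ in Ω, K ζ z * conj (K ζ z) := hKrep _ hKA z hz
  have hKint : K z z = ((∫ ζ in Ω, ‖K ζ z‖ ^ 2 : ℝ) : ℂ) := by
    rw [hrepK]
    have h1 : ∀ ζ : Cn n, K ζ z * conj (K ζ z) = ((‖K ζ z‖ ^ 2 : ℝ) : ℂ) := fun ζ => by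
      rw [Complex.mul_conj, ← Complex.sq_norm]
    simp_rw [h1]
    exact integral_ofReal
  have hκ_eq : κ = ∫ ζ in Ω, ‖K ζ z‖ ^ 2 := by rw [hκdef, hKint, Complex.ofReal_re]
  have hone : A2mem Ω (fun _ : Cn n => (1:ℂ)) := ⟨differentiableOn_const 1, memLp_const 1⟩
  have honerep : (1:ℂ) = ∫ ζ in Ω, conj (K ζ z) := by
    have h1 := hKrep _ hone z hz
    simpa using h1
  have hκpos : 0 < κ := by
    rcases lt_or_ge 0 κ with h | h
    · exact h
    · exfalso
      have hint : Integrable (fun ζ => ‖K ζ z‖ ^ 2) (volume.restrict Ω) := int_normsq hKA.2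
      have hz2 : ∫ ζ in Ω, ‖K ζ z‖ ^ 2 = 0 :=
        le_antisymm (hκ_eq ▸ h) (integral_nonneg fun ζ => sq_nonneg _)
      have hae : (fun ζ => ‖K ζ z‖ ^ 2) =ᵐ[volume.restrict Ω] 0 :=
        (integral_eq_zero_iff_of_nonneg (fun ζ => sq_nonneg _) hint).1 hz2
      have hae2 : (fun ζ => conj (K ζ z)) =ᵐ[volume.restrict Ω] 0 := by
        filter_upwards [hae] with ζ hζ
        have h3 : ‖K ζ z‖ ^ 2 = 0 := hζ
        have h4 : K ζ z = 0 := by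
          have := pow_eq_zero_iff (n := 2) (by norm_num) |>.1 h3
          exact norm_eq_zero.1 this
        simp [h4]
      have h5 : (1:ℂ) = 0 := by rw [honerep, integral_congr_ae hae2]; simp
      exact one_ne_zero h5
  have hsK : 0 < sK := Real.sqrt_pos.2 hκpos
  have hsK2 : sK ^ 2 = κ := Real.sq_sqrt hκpos.le
  have hKreal : K z z = (κ : ℂ) := by rw [hκ_eq]; exact hKint
  -- normalized kernel facts
  have hbz_eq : ∀ ζ, bz K z ζ = K ζ z / (sK:ℂ) := fun ζ => rfl
  have h2bz : (fun ζ => ((sK:ℂ))⁻¹ * K ζ z) = bz K z := by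
    funext ζ; rw [hbz_eq, div_eq_mul_inv, mul_comm]
  have hbzD : DifferentiableOn ℂ (bz K z) Ω := by
    have h1 : DifferentiableOn ℂ (fun ζ => ((sK:ℂ))⁻¹ * K ζ z) Ω := by
      intro ζ hζ; exact (hKA.1 ζ hζ).const_mul _
    rwa [h2bz] at h1
  have hbzmem : MemLp (bz K z) 2 (volume.restrict Ω) := by
    have h1 := hKA.2.const_mul ((sK:ℂ)⁻¹)
    rwa [h2bz] at h1
  have hbzA : A2mem Ω (bz K z) := ⟨hbzD, hbzmem⟩
  have hbz_sq : ∫ ζ in Ω, ‖bz K z ζ‖ ^ 2 = 1 := by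
    have h1 : ∀ ζ : Cn n, ‖bz K z ζ‖ ^ 2 = ‖K ζ z‖ ^ 2 / κ := by
      intro ζ
      rw [hbz_eq, norm_div, div_pow, Complex.norm_real, Real.norm_eq_abs, _root_.sq_abs, hsK2]
    simp_rw [h1]
    rw [integral_div, ← hκ_eq, div_self hκpos.ne']
  have hsKc : (sK:ℂ) ≠ 0 := Complex.ofReal_ne_zero.2 hsK.ne'
  have hbz_z : bz K z z = (sK : ℂ) := by
    rw [hbz_eq, hKreal, ← hsK2]
    push_cast
    rw [pow_two, mul_div_assoc, div_self hsKc, mul_one]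
  -- the product function gf
  set gf : Cn n → ℂ := fun ζ => bz K z ζ * c ζ with hgf
  have hgD : DifferentiableOn ℂ gf Ω := hbzD.mul hcD
  have hgmeas : AEStronglyMeasurable gf (volume.restrict Ω) :=
    (hgD.continuousOn).aestronglyMeasurable hΩo.measurableSet
  have hgbd : ∀ᵐ ζ ∂(volume.restrict Ω), ‖gf ζ‖ ≤ ‖bz K z ζ‖ := by
    rw [ae_restrict_iff' hΩo.measurableSet]
    filter_upwards with ζ hζ
    calc ‖gf ζ‖ = ‖bz K z ζ‖ * ‖c ζ‖ := norm_mul _ _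
      _ ≤ ‖bz K z ζ‖ * 1 := mul_le_mul_of_nonneg_left (hclt ζ hζ).le (norm_nonneg _)
      _ = ‖bz K z ζ‖ := mul_one _
  have hgmem : MemLp gf 2 (volume.restrict Ω) := hbzmem.of_le hgmeas hgbd
  have hgA : A2mem Ω gf := ⟨hgD, hgmem⟩
  have hgz : gf z = 0 := by
    show bz K z z * c z = 0
    rw [hcz0, mul_zero]
  have hcdiffAt : DifferentiableAt ℂ c z := (hcD z hz).differentiableAt (hΩo.mem_nhds hz)
  have hbzdiffAt : DifferentiableAt ℂ (bz K z) z :=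
    (hbzD z hz).differentiableAt (hΩo.mem_nhds hz)
  have hbdiffz : DifferentiableAt ℂ b z := (hbA.1 z hz).differentiableAt (hΩo.mem_nhds hz)
  have hgdiffz : DifferentiableAt ℂ gf z := (hgD z hz).differentiableAt (hΩo.mem_nhds hz)
  have hgderiv : fderiv ℂ gf z X = ((sK * Cm : ℝ) : ℂ) := by
    have h1 : fderiv ℂ gf z = bz K z z • fderiv ℂ c z + c z • fderiv ℂ (bz K z) z :=
      fderiv_mul hbzdiffAt hcdiffAt
    have h2 : fderiv ℂ gf z X = bz K z z * fderiv ℂ c z X + c z * fderiv ℂ (bz K z) z X := by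
      rw [h1]; simp
    rw [h2, hcz0, hbz_z, hcD']
    push_cast
    ring
  have hg_int_le : ∫ ζ in Ω, ‖gf ζ‖ ^ 2 ≤ 1 := by
    calc ∫ ζ in Ω, ‖gf ζ‖ ^ 2 ≤ ∫ ζ in Ω, ‖bz K z ζ‖ ^ 2 := by
          refine integral_mono_ae (int_normsq hgmem) (int_normsq hbzmem) ?_
          filter_upwards [hgbd] with ζ h
          exact pow_le_pow_left₀ (norm_nonneg _) h 2
      _ = 1 := hbz_sq
  -- Caratheodory metric positivity
  obtain ⟨rz, hrz, hballz⟩ : ∃ r > 0, ball z r ⊆ Ω := Metric.isOpen_iff.1 hΩo z hz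
  have hXn : (0:ℝ) < ‖X‖ := norm_pos_iff.2 hX
  set ρ := rz / ‖X‖ with hρdef
  have hρpos : 0 < ρ := div_pos hrz hXn
  have haff : ∀ w : ℂ, HasDerivAt (fun w : ℂ => z + w • X) X w := by
    intro w
    simpa using ((hasDerivAt_id w).smul_const X).const_add z
  have hCbdd : ∀ r ∈ {r | ∃ f : Cn n → ℂ, DifferentiableOn ℂ f Ω ∧ f z = 0 ∧
      (∀ ζ ∈ Ω, ‖f ζ‖ < 1) ∧ r = ‖fderiv ℂ f z X‖}, r ≤ 1/ρ := by
    rintro r ⟨f, hfD, hfz, hflt, rfl⟩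
    have hmapsΩ : ∀ w ∈ ball (0:ℂ) ρ, z + w • X ∈ Ω := by
      intro w hw
      apply hballz
      rw [mem_ball, dist_eq_norm, add_sub_cancel_left, norm_smul]
      calc ‖w‖ * ‖X‖ < ρ * ‖X‖ :=
            mul_lt_mul_of_pos_right (by simpa [dist_zero_right] using hw) hXn
        _ = rz := by rw [hρdef]; field_simp
    have hφD : DifferentiableOn ℂ (fun w : ℂ => f (z + w • X)) (ball (0:ℂ) ρ) := by
      intro w hw
      have h1 : DifferentiableAt ℂ (fun w : ℂ => z + w • X) w := (haff w).differentiableAt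
      have h2 : DifferentiableAt ℂ f (z + w • X) :=
        (hfD _ (hmapsΩ w hw)).differentiableAt (hΩo.mem_nhds (hmapsΩ w hw))
      exact (h2.comp w h1).differentiableWithinAt
    have hφ0 : (fun w : ℂ => f (z + w • X)) 0 = 0 := by simp [hfz]
    have hφmaps : Set.MapsTo (fun w : ℂ => f (z + w • X)) (ball (0:ℂ) ρ)
        (ball ((fun w : ℂ => f (z + w • X)) 0) 1) := by
      intro w hw
      rw [hφ0, mem_ball, dist_zero_right]
      exact hflt _ (hmapsΩ w hw)
    have hfz' : DifferentiableAt ℂ f z := (hfD z hz).differentiableAt (hΩo.mem_nhds hz)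
    have h0eq : z + (0:ℂ) • X = z := by simp
    have hF : HasFDerivAt f (fderiv ℂ f z) (z + (0:ℂ) • X) := by
      rw [h0eq]; exact hfz'.hasFDerivAt
    have hderivφ : HasDerivAt (fun w : ℂ => f (z + w • X)) (fderiv ℂ f z X) 0 :=
      hF.comp_hasDerivAt 0 (haff 0)
    have hsch := Complex.norm_deriv_le_div_of_mapsTo_ball hφD (hφmaps.mono_right ball_subset_closedBall) hρpos
    rw [hderivφ.deriv] at hsch
    simpa using hsch
  obtain ⟨R, hR⟩ := hΩb.subset_closedBall 0
  have hRz : ‖z‖ ≤ R := by simpa [dist_zero_right] using hR hz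
  set R' := ‖X‖ * (R + ‖z‖) with hR'def
  have hR'0 : 0 ≤ R' := mul_nonneg hXn.le (by linarith [norm_nonneg z, hRz])
  set ε := 1 / (R' + 1) with hεdef
  have hεpos : 0 < ε := by rw [hεdef]; positivity
  set L := innerSL ℂ X with hLdef
  set f₀ : Cn n → ℂ := fun ζ => (ε:ℂ) * (L ζ - L z) with hf₀def
  have hf₀D : DifferentiableOn ℂ f₀ Ω := by
    intro ζ hζ
    exact (((L.differentiable.differentiableAt).sub_const _).const_mul _).differentiableWithinAt
  have hf₀z : f₀ z = 0 := by simp [hf₀def]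
  have hf₀lt : ∀ ζ ∈ Ω, ‖f₀ ζ‖ < 1 := by
    intro ζ hζ
    have hζR : ‖ζ‖ ≤ R := by simpa [dist_zero_right] using hR hζ
    have h1 : ‖L ζ - L z‖ = ‖(inner ℂ X (ζ - z) : ℂ)‖ := by
      rw [hLdef]; simp [innerSL_apply_apply, inner_sub_right]
    have h2 : ‖L ζ - L z‖ ≤ ‖X‖ * ‖ζ - z‖ := by
      rw [h1]; exact norm_inner_le_norm X (ζ - z)
    have h3 : ‖ζ - z‖ ≤ R + ‖z‖ := by
      calc ‖ζ - z‖ ≤ ‖ζ‖ + ‖z‖ := norm_sub_le _ _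
        _ ≤ R + ‖z‖ := by linarith
    have h4 : ‖L ζ - L z‖ ≤ R' := by
      rw [hR'def]
      calc ‖L ζ - L z‖ ≤ ‖X‖ * ‖ζ - z‖ := h2
        _ ≤ ‖X‖ * (R + ‖z‖) := mul_le_mul_of_nonneg_left h3 hXn.le
    calc ‖f₀ ζ‖ = ε * ‖L ζ - L z‖ := by
          rw [hf₀def]
          simp only [norm_mul, Complex.norm_real, Real.norm_eq_abs, _root_.abs_of_pos hεpos]
      _ ≤ ε * R' := mul_le_mul_of_nonneg_left h4 hεpos.le
      _ < 1 := by rw [hεdef]; rw [div_mul_eq_mul_div, div_lt_one (by linarith)]; linarith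
  have hf₀deriv : fderiv ℂ f₀ z X = (ε:ℂ) * ((‖X‖:ℂ) ^ 2) := by
    have h1 : HasFDerivAt f₀ ((ε:ℂ) • (L : Cn n →L[ℂ] ℂ)) z := by
      simpa [hf₀def] using ((L.hasFDerivAt (x := z)).sub_const (L z)).const_mul (ε:ℂ)
    rw [h1.fderiv]
    simp only [ContinuousLinearMap.coe_smul', Pi.smul_apply, smul_eq_mul]
    congr 1
    rw [hLdef]
    simp only [innerSL_apply_apply]
    exact inner_self_eq_norm_sq_to_K X
  have hCpos : 0 < Cm := by
    have hmem : ε * ‖X‖ ^ 2 ∈ {r | ∃ f : Cn n → ℂ, DifferentiableOn ℂ f Ω ∧ f z = 0 ∧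
        (∀ ζ ∈ Ω, ‖f ζ‖ < 1) ∧ r = ‖fderiv ℂ f z X‖} := by
      refine ⟨f₀, hf₀D, hf₀z, hf₀lt, ?_⟩
      have hcast : (ε:ℂ) * ((‖X‖:ℂ) ^ 2) = (((ε * ‖X‖ ^ 2 : ℝ)):ℂ) := by push_cast; ring
      rw [hf₀deriv, hcast, Complex.norm_real, Real.norm_eq_abs,
        _root_.abs_of_nonneg (by positivity : (0:ℝ) ≤ ε * ‖X‖ ^ 2)]
    have hle : ε * ‖X‖ ^ 2 ≤ Cm := by
      rw [hCm]
      exact le_csSup ⟨1/ρ, hCbdd⟩ hmem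
    have : 0 < ε * ‖X‖ ^ 2 := by positivity
    linarith
  -- Bergman metric positivity
  have hb_sq : ∫ ζ in Ω, ‖b ζ‖ ^ 2 = 1 := by
    have h1 : Real.sqrt (∫ ζ in Ω, ‖b ζ‖ ^ 2) = 1 := hbnorm
    exact Real.sqrt_eq_one.1 h1
  have hBge : sK * Cm ≤ M := by
    have h1 := hbext gf hgD hgz hg_int_le
    rw [hgderiv] at h1
    rw [Complex.norm_real, Real.norm_eq_abs,
      _root_.abs_of_nonneg (mul_nonneg hsK.le hCpos.le)] at h1
    exact h1
  have hBmpos : 0 < Bm := by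
    rw [hMdef] at hBge
    have := (mul_le_mul_iff_right₀ hsK).1 hBge
    linarith
  have hMpos : 0 < M := by rw [hMdef]; exact mul_pos hsK hBmpos
  have hMc : ((M:ℝ):ℂ) ≠ 0 := Complex.ofReal_ne_zero.2 hMpos.ne'
  -- key variational identity
  have hstar : ∀ f : Cn n → ℂ, A2mem Ω f → f z = 0 →
      fderiv ℂ f z X = ((M:ℝ):ℂ) * ∫ ζ in Ω, f ζ * conj (b ζ) := by
    rintro f ⟨hfD, hfmem⟩ hfz
    set D := fderiv ℂ f z X with hDdef
    set J := ∫ ζ in Ω, f ζ * conj (b ζ) with hJdef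
    set S := ∫ ζ in Ω, ‖f ζ‖ ^ 2 with hSdef
    have hS0 : 0 ≤ S := integral_nonneg fun _ => sq_nonneg _
    have hfdiffz : DifferentiableAt ℂ f z := (hfD z hz).differentiableAt (hΩo.mem_nhds hz)
    have hkey : ∀ u : ℂ, ‖u‖ = 1 → ∀ t : ℝ, 0 < t → t ≤ 1/(2*(‖J‖+1)) →
        2*t*((u * (((M:ℝ):ℂ)*D - ((M:ℝ):ℂ)^2*J)).re) ≤ t^2 * (M^2 * S) := by
      intro u hu t ht ht'
      have hqre : (((t:ℂ)*u)*J).re = t*(u*J).re := by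
        have h1 : ((t:ℂ)*u)*J = ((t:ℝ):ℂ)*(u*J) := by push_cast; ring
        rw [h1, Complex.re_ofReal_mul]
      have hq : ∫ ζ in Ω, ‖b ζ + ((t:ℂ)*u) * f ζ‖ ^ 2
          = 1 + 2*(t*(u*J).re) + t^2 * S := by
        rw [exp_sq hbA.2 hfmem ((t:ℂ)*u), hb_sq, ← hJdef, hqre]
        congr 1
        rw [norm_mul, Complex.norm_real, Real.norm_eq_abs, hu, mul_one, _root_.sq_abs]
      set q := 1 + 2*(t*(u*J).re) + t^2*S with hqdef
      have hre_bound : |t*(u*J).re| ≤ t * ‖J‖ := by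
        rw [abs_mul, _root_.abs_of_pos ht]
        refine mul_le_mul_of_nonneg_left ?_ ht.le
        calc |(u*J).re| ≤ ‖u*J‖ := Complex.abs_re_le_norm _
          _ = ‖J‖ := by rw [norm_mul, hu, one_mul]
      have htJ : t * ‖J‖ + t ≤ 1/2 := by
        have h1 : t*(‖J‖+1) ≤ (1/(2*(‖J‖+1)))*(‖J‖+1) :=
          mul_le_mul_of_nonneg_right ht' (by positivity)
        have h2 : (1/(2*(‖J‖+1)))*(‖J‖+1) = 1/2 := by
          field_simp
        have h3 : t*(‖J‖+1) = t*‖J‖ + t := by ring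
        linarith
      have hqpos : 0 < q := by
        have h4 := (abs_le.1 hre_bound).1
        have h5 : 0 ≤ t^2*S := mul_nonneg (sq_nonneg t) hS0
        rw [hqdef]
        linarith
      set rr := (Real.sqrt q)⁻¹ with hrrdef
      have hrpos : 0 < Real.sqrt q := Real.sqrt_pos.2 hqpos
      have hrrpos : 0 < rr := inv_pos.2 hrpos
      set f' : Cn n → ℂ := fun ζ => (rr:ℂ) * (b ζ + ((t:ℂ)*u) * f ζ) with hf'def
      have hf'D : DifferentiableOn ℂ f' Ω := by
        intro ζ hζ
        exact (((hbA.1 ζ hζ).add ((hfD ζ hζ).const_mul _)).const_mul _)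
      have hf'z : f' z = 0 := by
        rw [hf'def]; simp [hbz0, hfz]
      have hf'int : ∫ ζ in Ω, ‖f' ζ‖ ^ 2 ≤ 1 := by
        have h1 : ∀ ζ : Cn n, ‖f' ζ‖ ^ 2 = rr^2 * ‖b ζ + ((t:ℂ)*u) * f ζ‖ ^ 2 := by
          intro ζ
          rw [hf'def, norm_mul, mul_pow, Complex.norm_real, Real.norm_eq_abs, _root_.sq_abs]
        have hq1 : rr^2 * q = 1 := by
          rw [hrrdef, inv_pow, Real.sq_sqrt hqpos.le]
          exact inv_mul_cancel₀ hqpos.ne'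
        simp_rw [h1]
        rw [integral_const_mul, hq, hq1]
      have hext := hbext f' hf'D hf'z hf'int
      have h1 : DifferentiableAt ℂ (fun ζ => ((t:ℂ)*u) * f ζ) z := hfdiffz.const_mul _
      have hsum : DifferentiableAt ℂ (fun ζ => b ζ + ((t:ℂ)*u) * f ζ) z := hbdiffz.add h1
      have hder : fderiv ℂ f' z X = (rr:ℂ) * (((M:ℝ):ℂ) + ((t:ℂ)*u) * D) := by
        rw [hf'def]
        rw [fderiv_const_mul hsum, fderiv_fun_add hbdiffz h1, fderiv_const_mul hfdiffz]
        simp only [ContinuousLinearMap.coe_smul', Pi.smul_apply, ContinuousLinearMap.add_apply,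
          smul_eq_mul]
        rw [hbD, hDdef]
      rw [hder] at hext
      have hnormrr : ‖(rr:ℂ) * (((M:ℝ):ℂ) + ((t:ℂ)*u) * D)‖
          = rr * ‖((M:ℝ):ℂ) + ((t:ℂ)*u) * D‖ := by
        rw [norm_mul, Complex.norm_real, Real.norm_eq_abs, _root_.abs_of_pos hrrpos]
      rw [hnormrr] at hext
      have hnorm_ineq : ‖((M:ℝ):ℂ) + ((t:ℂ)*u) * D‖ ≤ M * Real.sqrt q := by
        have h2 : rr * ‖((M:ℝ):ℂ) + ((t:ℂ)*u) * D‖ ≤ M := hext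
        calc ‖((M:ℝ):ℂ) + ((t:ℂ)*u) * D‖
            = (Real.sqrt q) * (rr * ‖((M:ℝ):ℂ) + ((t:ℂ)*u) * D‖) := by
              rw [hrrdef]; field_simp
          _ ≤ (Real.sqrt q) * M := mul_le_mul_of_nonneg_left h2 hrpos.le
          _ = M * Real.sqrt q := mul_comm _ _
      have hsq : ‖((M:ℝ):ℂ) + ((t:ℂ)*u) * D‖ ^ 2 ≤ M^2 * q := by
        have h3 : (M * Real.sqrt q)^2 = M^2 * q := by
          rw [mul_pow, Real.sq_sqrt hqpos.le]
        have h4 := pow_le_pow_left₀ (norm_nonneg _) hnorm_ineq 2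
        rw [h3] at h4
        exact h4
      have hexp : ‖((M:ℝ):ℂ) + ((t:ℂ)*u) * D‖ ^ 2
          = M^2 + 2*(t*M*(u*D).re) + t^2*‖D‖^2 := by
        rw [csq]
        have hconj : conj ((M:ℝ):ℂ) = ((M:ℝ):ℂ) := Complex.conj_ofReal M
        rw [hconj]
        have h4 : ((((t:ℂ)*u) * D) * ((M:ℝ):ℂ)).re = t*M*(u*D).re := by
          have h5 : (((t:ℂ)*u) * D) * ((M:ℝ):ℂ) = ((t*M:ℝ):ℂ) * (u*D) := by
            push_cast; ring
          rw [h5, Complex.re_ofReal_mul]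
        rw [h4]
        have h7 : ‖((M:ℝ):ℂ)‖^2 = M^2 := by
          rw [Complex.norm_real, Real.norm_eq_abs, _root_.sq_abs]
        have h8 : ‖(((t:ℂ)*u)) * D‖^2 = t^2*‖D‖^2 := by
          rw [norm_mul, norm_mul, Complex.norm_real, Real.norm_eq_abs, hu, mul_one,
            mul_pow, _root_.sq_abs]
        rw [h7, h8]
      have hEre : (u * (((M:ℝ):ℂ)*D - ((M:ℝ):ℂ)^2*J)).re = M*(u*D).re - M^2*(u*J).re := by
        have h6 : u * (((M:ℝ):ℂ)*D - ((M:ℝ):ℂ)^2*J)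
            = ((M:ℝ):ℂ)*(u*D) - ((M^2:ℝ):ℂ)*(u*J) := by push_cast; ring
        rw [h6, Complex.sub_re, Complex.re_ofReal_mul, Complex.re_ofReal_mul]
      rw [hEre]
      have hsq' : M^2 + 2*(t*M*(u*D).re) + t^2*‖D‖^2 ≤ M^2 * (1 + 2*(t*(u*J).re) + t^2*S) := by
        rw [← hexp, ← hqdef]; exact hsq
      have h10 : 0 ≤ t^2*‖D‖^2 := mul_nonneg (sq_nonneg t) (sq_nonneg _)
      have h11 : M^2 * (1 + 2*(t*(u*J).re) + t^2*S)
          = M^2 + 2*(M^2*(t*(u*J).re)) + M^2*(t^2*S) := by ring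
      have h12 : 2*t*(M*(u*D).re - M^2*(u*J).re)
          = 2*(t*M*(u*D).re) - 2*(M^2*(t*(u*J).re)) := by ring
      have h13 : t^2 * (M^2 * S) = M^2*(t^2*S) := by ring
      rw [h12, h13]
      linarith
    have hre_le : ∀ u : ℂ, ‖u‖ = 1 → (u * (((M:ℝ):ℂ)*D - ((M:ℝ):ℂ)^2*J)).re ≤ 0 := by
      intro u hu
      by_contra hpos
      push_neg at hpos
      set x := (u * (((M:ℝ):ℂ)*D - ((M:ℝ):ℂ)^2*J)).re with hxdef
      set t := min (1/(2*(‖J‖+1))) (x/(M^2*S+1)) with htdef2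
      have hxpos : 0 < x := hpos
      have hden : (0:ℝ) < M^2*S+1 := by
        have := mul_nonneg (sq_nonneg M) hS0
        linarith
      have ht0 : 0 < t := lt_min (by positivity) (div_pos hxpos hden)
      have hkey' := hkey u hu t ht0 (min_le_left _ _)
      have h1 : t ≤ x/(M^2*S+1) := min_le_right _ _
      have h2 : t*(M^2*S+1) ≤ x := by
        rw [← le_div_iff₀ hden]; exact h1
      have hmul : t*(t*(M^2*S+1)) ≤ t*x := mul_le_mul_of_nonneg_left h2 ht0.le
      have he1 : t*(t*(M^2*S+1)) = t^2*(M^2*S) + t^2 := by ring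
      have he2 : 0 < t*x := mul_pos ht0 hxpos
      have he3 : 0 < t^2 := by positivity
      linarith [hkey']
    have hE0 : ((M:ℝ):ℂ)*D - ((M:ℝ):ℂ)^2*J = 0 := by
      by_contra hEne
      set E := ((M:ℝ):ℂ)*D - ((M:ℝ):ℂ)^2*J with hEdef
      have hEn : 0 < ‖E‖ := norm_pos_iff.2 hEne
      have hunorm : ‖conj E / ((‖E‖:ℝ):ℂ)‖ = 1 := by
        rw [norm_div, RCLike.norm_conj, Complex.norm_real, Real.norm_eq_abs,
          _root_.abs_of_pos hEn, div_self hEn.ne']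
      have h7 := hre_le (conj E / ((‖E‖:ℝ):ℂ)) hunorm
      have hcalc : (conj E / ((‖E‖:ℝ):ℂ)) * E = ((‖E‖:ℝ):ℂ) := by
        rw [div_mul_eq_mul_div, mul_comm, Complex.mul_conj]
        rw [Complex.normSq_eq_norm_sq]
        rw [show ((‖E‖^2:ℝ):ℂ) = ((‖E‖:ℝ):ℂ)^2 by push_cast; ring]
        rw [pow_two, mul_div_assoc, div_self (Complex.ofReal_ne_zero.2 hEn.ne'), mul_one]
      rw [hcalc] at h7
      rw [Complex.ofReal_re] at h7
      linarith
    have h8 : ((M:ℝ):ℂ)*D = ((M:ℝ):ℂ) * (((M:ℝ):ℂ)*J) := by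
      have := sub_eq_zero.1 hE0
      rw [this]; ring
    exact mul_left_cancel₀ hMc h8
  -- the inner product of gf with b
  have hJg : ∫ ζ in Ω, gf ζ * conj (b ζ) = ((Cm/Bm : ℝ):ℂ) := by
    have h1 := hstar gf hgA hgz
    rw [hgderiv] at h1
    have h2 : ∫ ζ in Ω, gf ζ * conj (b ζ) = ((sK*Cm:ℝ):ℂ) / ((M:ℝ):ℂ) := by
      rw [h1, mul_comm, mul_div_assoc, div_self hMc, mul_one]
    rw [h2, ← Complex.ofReal_div]
    congr 1
    rw [hMdef, mul_div_mul_left _ _ hsK.ne']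
  set t := Cm / Bm with htdef
  have htpos : 0 < t := div_pos hCpos hBmpos
  -- the difference function
  set φ : Cn n → ℂ := fun ζ => gf ζ - ((t:ℝ):ℂ) * b ζ with hφdef
  have hφD : DifferentiableOn ℂ φ Ω := by
    intro ζ hζ
    exact (hgD ζ hζ).sub ((hbA.1 ζ hζ).const_mul _)
  have hφmem : MemLp φ 2 (volume.restrict Ω) := by
    exact hgmem.sub (hbA.2.const_mul _)
  have hφz : φ z = 0 := by
    rw [hφdef]; simp [hgz, hbz0]
  have hφderiv : fderiv ℂ φ z X = 0 := by
    have h1 : DifferentiableAt ℂ (fun ζ => ((t:ℝ):ℂ) * b ζ) z := hbdiffz.const_mul _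
    have h2 : fderiv ℂ φ z = fderiv ℂ gf z - fderiv ℂ (fun ζ => ((t:ℝ):ℂ) * b ζ) z := by
      rw [hφdef]; exact fderiv_sub hgdiffz h1
    have h3 : fderiv ℂ φ z X = fderiv ℂ gf z X - ((t:ℝ):ℂ) * fderiv ℂ b z X := by
      rw [h2]
      simp only [ContinuousLinearMap.sub_apply]
      rw [fderiv_const_mul hbdiffz]
      simp
    rw [h3, hgderiv, hbD, htdef]
    have hBc : ((Bm:ℝ):ℂ) ≠ 0 := Complex.ofReal_ne_zero.2 hBmpos.ne'
    push_cast
    field_simp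
    rw [hMdef]
    push_cast
    ring
  have hφS : SzX Ω z X φ := ⟨⟨hφD, hφmem⟩, hφz, hφderiv⟩
  -- conjugation helper
  have hconj_int : ∀ (p r : Cn n → ℂ), (∫ ζ in Ω, p ζ * conj (r ζ)) = 0 →
      (∫ ζ in Ω, r ζ * conj (p ζ)) = 0 := by
    intro p r h0
    have h1 : (fun ζ => r ζ * conj (p ζ)) = fun ζ => conj (p ζ * conj (r ζ)) := by
      funext ζ; rw [map_mul, Complex.conj_conj]; ring
    rw [h1, integral_conj, h0, map_zero]
  have hconj_int2 : ∀ (p r : Cn n → ℂ), (∫ ζ in Ω, r ζ * conj (p ζ))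
      = conj (∫ ζ in Ω, p ζ * conj (r ζ)) := by
    intro p r
    rw [← integral_conj]
    congr 1
    funext ζ
    have e1 : conj (p ζ * conj (r ζ)) = conj (p ζ) * conj (conj (r ζ)) := map_mul _ _ _
    rw [e1, Complex.conj_conj]
    ring
  -- sets P and Orth
  have hP_of_sq : (∫ ζ in Ω, ‖φ ζ‖ ^ 2) = 0 → ∀ ζ ∈ Ω, ((t:ℝ):ℂ) * b ζ = gf ζ := by
    intro h0 ζ hζ
    have hae0 : (fun ζ => ‖φ ζ‖ ^ 2) =ᵐ[volume.restrict Ω] 0 :=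
      (integral_eq_zero_iff_of_nonneg (fun ζ => sq_nonneg _) (int_normsq hφmem)).1 h0
    have hae : φ =ᵐ[volume.restrict Ω] 0 := by
      filter_upwards [hae0] with ζ hζ'
      have h3 : ‖φ ζ‖ ^ 2 = 0 := hζ'
      have h4 : ‖φ ζ‖ = 0 := by
        have := pow_eq_zero_iff (n := 2) (by norm_num) |>.1 h3
        exact this
      exact norm_eq_zero.1 h4
    have h5 := ae_zero_eqOn hΩo hφD.continuousOn hae ζ hζ
    have h6 : gf ζ - ((t:ℝ):ℂ) * b ζ = 0 := h5
    exact (sub_eq_zero.1 h6).symm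
  have hstar_zero : ∀ f : Cn n → ℂ, A2mem Ω f → f z = 0 → fderiv ℂ f z X = 0 →
      (∫ ζ in Ω, f ζ * conj (b ζ)) = 0 := by
    intro f hfA hfz hfd
    have h1 := hstar f hfA hfz
    rw [hfd] at h1
    rcases mul_eq_zero.1 h1.symm with h2 | h2
    · exact absurd h2 hMc
    · exact h2
  have horth_of_P : (∀ ζ ∈ Ω, ((t:ℝ):ℂ) * b ζ = gf ζ) →
      (∀ h, SzX Ω z X h → (∫ ζ in Ω, bz K z ζ * c ζ * conj (h ζ)) = 0) := by
    intro hP h hS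
    obtain ⟨hhA, hhz, hhD⟩ := hS
    have hbh : ∫ ζ in Ω, b ζ * conj (h ζ) = 0 :=
      hconj_int h b (hstar_zero h hhA hhz hhD)
    calc ∫ ζ in Ω, bz K z ζ * c ζ * conj (h ζ)
        = ∫ ζ in Ω, ((t:ℝ):ℂ) * (b ζ * conj (h ζ)) := by
          refine setIntegral_congr_fun hΩo.measurableSet ?_
          intro ζ hζ
          show bz K z ζ * c ζ * conj (h ζ) = ((t:ℝ):ℂ) * (b ζ * conj (h ζ))
          rw [← mul_assoc, hP ζ hζ]
      _ = ((t:ℝ):ℂ) * ∫ ζ in Ω, b ζ * conj (h ζ) := integral_const_mul _ _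
      _ = 0 := by rw [hbh, mul_zero]
  have hP_of_orth : (∀ h, SzX Ω z X h → (∫ ζ in Ω, bz K z ζ * c ζ * conj (h ζ)) = 0) →
      (∀ ζ ∈ Ω, ((t:ℝ):ℂ) * b ζ = gf ζ) := by
    intro ho
    have h1 : ∫ ζ in Ω, gf ζ * conj (φ ζ) = 0 := ho φ hφS
    have h2 : ∫ ζ in Ω, φ ζ * conj (b ζ) = 0 := hstar_zero φ ⟨hφD, hφmem⟩ hφz hφderiv
    have h3 : ∫ ζ in Ω, b ζ * conj (φ ζ) = 0 := hconj_int φ b h2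
    have h4 : ∫ ζ in Ω, φ ζ * conj (φ ζ) = 0 := by
      have hexpand : (fun ζ => φ ζ * conj (φ ζ))
          = fun ζ => gf ζ * conj (φ ζ) - ((t:ℝ):ℂ) * (b ζ * conj (φ ζ)) := by
        funext ζ
        show φ ζ * conj (φ ζ) = _
        rw [hφdef]
        ring
      rw [hexpand, integral_sub (int_mul_conj hgmem hφmem)
        ((int_mul_conj hbA.2 hφmem).const_mul _), integral_const_mul, h1, h3]
      ring
    have h5 : (∫ ζ in Ω, ‖φ ζ‖ ^ 2) = 0 := by
      have h6 : (fun ζ => φ ζ * conj (φ ζ)) = fun ζ => ((‖φ ζ‖ ^ 2 : ℝ) : ℂ) := by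
        funext ζ
        rw [Complex.mul_conj, ← Complex.sq_norm]
      rw [h6] at h4
      have e := integral_ofReal (f := fun ζ => ‖φ ζ‖ ^ 2) (μ := volume.restrict Ω) (𝕜 := ℂ)
      have h4'' : ((∫ ζ in Ω, ‖φ ζ‖ ^ 2 : ℝ) : ℂ) = 0 := e.symm.trans h4
      exact Complex.ofReal_eq_zero.1 h4''
    exact hP_of_sq h5
  -- relating L2norm of gf to t
  have hgint_nonneg : 0 ≤ ∫ ζ in Ω, ‖gf ζ‖ ^ 2 := integral_nonneg fun _ => sq_nonneg _
  have hng_of_P : (∀ ζ ∈ Ω, ((t:ℝ):ℂ) * b ζ = gf ζ) → L2norm Ω gf = t := by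
    intro hP
    have h1 : ∫ ζ in Ω, ‖gf ζ‖ ^ 2 = t^2 := by
      calc ∫ ζ in Ω, ‖gf ζ‖ ^ 2 = ∫ ζ in Ω, t^2 * ‖b ζ‖ ^ 2 := by
            refine setIntegral_congr_fun hΩo.measurableSet ?_
            intro ζ hζ
            show ‖gf ζ‖ ^ 2 = _
            rw [← hP ζ hζ, norm_mul, mul_pow, Complex.norm_real, Real.norm_eq_abs,
              _root_.sq_abs]
        _ = t^2 * ∫ ζ in Ω, ‖b ζ‖ ^ 2 := integral_const_mul _ _
        _ = t^2 := by rw [hb_sq, mul_one]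
    show Real.sqrt (∫ ζ in Ω, ‖gf ζ‖ ^ 2) = t
    rw [h1, Real.sqrt_sq htpos.le]
  have hng_pos : 0 < L2norm Ω gf := by
    show 0 < Real.sqrt (∫ ζ in Ω, ‖gf ζ‖ ^ 2)
    rw [Real.sqrt_pos]
    rcases hgint_nonneg.lt_or_eq with h | h
    · exact h
    · exfalso
      have hae0 : (fun ζ => ‖gf ζ‖ ^ 2) =ᵐ[volume.restrict Ω] 0 :=
        (integral_eq_zero_iff_of_nonneg (fun ζ => sq_nonneg _) (int_normsq hgmem)).1 h.symm
      have hae : gf =ᵐ[volume.restrict Ω] 0 := by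
        filter_upwards [hae0] with ζ hζ'
        have h4 : ‖gf ζ‖ = 0 := pow_eq_zero_iff (n := 2) (by norm_num) |>.1 hζ'
        exact norm_eq_zero.1 h4
      have heq0 := ae_zero_eqOn hΩo hgD.continuousOn hae
      have hnhds : gf =ᶠ[nhds z] (fun _ => 0) := by
        filter_upwards [hΩo.mem_nhds hz] with ζ hζ
        exact heq0 ζ hζ
      have h7 : fderiv ℂ gf z = fderiv ℂ (fun _ : Cn n => (0:ℂ)) z := hnhds.fderiv_eq
      have h8 : fderiv ℂ gf z X = 0 := by rw [h7]; simp
      rw [hgderiv] at h8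
      have h9 : sK * Cm = 0 := by exact_mod_cast h8
      nlinarith [hsK, hCpos]
  have hng2 : (L2norm Ω gf)^2 = ∫ ζ in Ω, ‖gf ζ‖ ^ 2 := Real.sq_sqrt hgint_nonneg
  -- general inequality  Cm / ng ≤ Bm
  have hBge2 : Cm / L2norm Ω gf ≤ Bm := by
    set ng := L2norm Ω gf with hngdef
    set f₂ : Cn n → ℂ := fun ζ => ((ng⁻¹:ℝ):ℂ) * gf ζ with hf₂def
    have hf₂D : DifferentiableOn ℂ f₂ Ω := by
      intro ζ hζ; exact (hgD ζ hζ).const_mul _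
    have hf₂z : f₂ z = 0 := by rw [hf₂def]; simp [hgz]
    have hf₂int : ∫ ζ in Ω, ‖f₂ ζ‖ ^ 2 ≤ 1 := by
      have h1 : ∀ ζ : Cn n, ‖f₂ ζ‖ ^ 2 = (ng⁻¹)^2 * ‖gf ζ‖ ^ 2 := by
        intro ζ
        rw [hf₂def, norm_mul, mul_pow, Complex.norm_real, Real.norm_eq_abs, _root_.sq_abs]
      simp_rw [h1]
      rw [integral_const_mul, ← hng2, inv_pow, inv_mul_cancel₀ (pow_ne_zero 2 hng_pos.ne')]
    have hder : fderiv ℂ f₂ z X = ((ng⁻¹ * (sK*Cm) : ℝ):ℂ) := by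
      rw [hf₂def, fderiv_const_mul hgdiffz]
      simp only [ContinuousLinearMap.coe_smul', Pi.smul_apply, smul_eq_mul]
      rw [hgderiv]
      push_cast
      ring
    have h2 := hbext f₂ hf₂D hf₂z hf₂int
    rw [hder, Complex.norm_real, Real.norm_eq_abs,
      _root_.abs_of_nonneg (by positivity : (0:ℝ) ≤ ng⁻¹ * (sK*Cm))] at h2
    rw [hMdef] at h2
    have h3 : sK * (Cm / ng) = ng⁻¹ * (sK*Cm) := by
      field_simp
    have h4 : sK * (Cm / ng) ≤ sK * Bm := by rw [h3]; exact h2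
    exact (mul_le_mul_iff_right₀ hsK).1 h4
  have hP_of_notLHS : ¬ (Bm > Cm / L2norm Ω gf) → (∀ ζ ∈ Ω, ((t:ℝ):ℂ) * b ζ = gf ζ) := by
    intro hn
    have heq : Cm / L2norm Ω gf = Bm := le_antisymm hBge2 (not_lt.1 hn)
    have hng_eq : L2norm Ω gf = t := by
      rw [htdef]
      rw [div_eq_iff hng_pos.ne'] at heq
      rw [heq]
      rw [mul_comm, mul_div_assoc, div_self hBmpos.ne', mul_one]
    have hint_g : ∫ ζ in Ω, ‖gf ζ‖ ^ 2 = t^2 := by rw [← hng2, hng_eq]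
    have hbg : ∫ ζ in Ω, b ζ * conj (gf ζ) = ((t:ℝ):ℂ) := by
      rw [hconj_int2 gf b, hJg, Complex.conj_ofReal]
    have hexp := exp_sq hgmem hbA.2 (-(t:ℂ))
    have h8 : ∫ ζ in Ω, ‖φ ζ‖ ^ 2 = 0 := by
      have hLHS : ∫ ζ in Ω, ‖φ ζ‖ ^ 2 = ∫ ζ in Ω, ‖gf ζ + (-(t:ℂ))*b ζ‖ ^ 2 := by
        congr 1
        funext ζ
        show ‖gf ζ - ((t:ℝ):ℂ) * b ζ‖ ^ 2 = _
        have h7 : gf ζ - ((t:ℝ):ℂ) * b ζ = gf ζ + (-(t:ℂ))*b ζ := by ring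
        rw [h7]
      rw [hLHS, hexp, hint_g, hbg, hb_sq]
      have h9 : ((-(t:ℂ)) * ((t:ℝ):ℂ)).re = -(t^2) := by
        have : (-(t:ℂ)) * ((t:ℝ):ℂ) = ((-(t^2):ℝ):ℂ) := by push_cast; ring
        rw [this, Complex.ofReal_re]
      rw [h9]
      have h10 : ‖-(t:ℂ)‖^2 = t^2 := by
        rw [norm_neg, Complex.norm_real, Real.norm_eq_abs, _root_.sq_abs]
      rw [h10]
      ring
    exact hP_of_sq h8
  have hnotLHS_of_P : (∀ ζ ∈ Ω, ((t:ℝ):ℂ) * b ζ = gf ζ) → ¬ (Bm > Cm / L2norm Ω gf) := by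
    intro hP
    rw [hng_of_P hP, htdef]
    have h1 : Cm / (Cm/Bm) = Bm := by
      rw [div_div_eq_mul_div, mul_comm, mul_div_assoc, div_self hCpos.ne', mul_one]
    rw [h1]
    exact lt_irrefl _
  -- final assembly
  have hiff1 : (Bm > Cm / L2norm Ω gf) ↔ ¬ (∀ ζ ∈ Ω, ((t:ℝ):ℂ) * b ζ = gf ζ) := by
    constructor
    · intro hL hP; exact hnotLHS_of_P hP hL
    · intro hnP; by_contra hn; exact hnP (hP_of_notLHS hn)
  have hiff2 : (Bm > Cm / L2norm Ω gf) ↔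
      ¬ (∀ h, SzX Ω z X h → (∫ ζ in Ω, bz K z ζ * c ζ * conj (h ζ)) = 0) := by
    constructor
    · intro hL ho; exact hnotLHS_of_P (hP_of_orth ho) hL
    · intro hno; by_contra hn; exact hno (horth_of_P (hP_of_notLHS hn))
  constructor
  · rw [hiff1]
    constructor
    · intro hnP
      by_contra hex
      push_neg at hex
      refine hnP ?_
      intro ζ hζ
      exact hex ζ hζ
    · rintro ⟨ζ, hζ, hne⟩ hP
      exact hne (hP ζ hζ)
  · exact hiff2
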